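/- Let m be an odd positive integer, let r be an integer with 1 ≤ r ≤ m−1, and let s : ℤ → ℤ be a finitely supported function. Then the sequence N ↦ Σ_{k ∈ ℤ, |k| ≤ 2mN, k ≡ r (mod m)} X^k(s) is eventually constant, and its eventual value equals 2·Σ_{l=0}^{m-1} (-1)^l ( Σ_{i ≡ r+l (mod 2m)} s_i ). -/

import Mathlib

open Finset

/-- The weight `η^k(l)`, equal to `(-1)^(l-k)` for `l ≥ k` and `(-1)^(l-k+1)`
for `l < k`. -/
def eta (k l : ℤ) : ℤ :=
  if k ≤ l then (-1) ^ (l - k).natAbs else (-1) ^ ((k - l).natAbs + 1)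

/-- The shifted Euler characteristic
`X^k(s) = Σ_{l ≥ 0} (-1)^l s_{k+l} + Σ_{l < 0} (-1)^{l+1} s_{k+l} = Σ_l η^k(l) s_l`. -/
noncomputable def Xchi (k : ℤ) (s : ℤ → ℤ) : ℤ := ∑ᶠ l : ℤ, eta k l * s l

lemma negOnePow_natAbs' (n : ℤ) : ((-1 : ℤ)) ^ n.natAbs = (n.negOnePow : ℤ) := by
  rw [← Int.coe_negOnePow_natCast, Int.natCast_natAbs, Int.negOnePow_abs]

lemma eta_eq (k l : ℤ) :
    eta k l = (if k ≤ l then 1 else -1) * ((l - k).negOnePow : ℤ) := by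
  unfold eta
  split_ifs with h
  · rw [negOnePow_natAbs', one_mul]
  · rw [pow_succ, negOnePow_natAbs']
    have h2 : k - l = -(l - k) := by ring
    rw [h2, Int.negOnePow_neg]
    ring

lemma sum_negOnePow_Icc (a b : ℤ) (hab : a ≤ b + 1) :
    ∑ t ∈ Finset.Icc a b, (t.negOnePow : ℤ) =
      if Even (b + 1 - a) then 0 else (a.negOnePow : ℤ) := by
  have key : ∑ t ∈ Finset.Icc a b, (t.negOnePow : ℤ)
      = ∑ i ∈ Finset.range (b + 1 - a).toNat, (a.negOnePow : ℤ) * (-1) ^ i := by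
    refine Finset.sum_nbij' (fun t => (t - a).toNat) (fun i => a + (i : ℤ)) ?_ ?_ ?_ ?_ ?_
    · intro t ht; simp only [Finset.mem_Icc] at ht; simp only [Finset.mem_range]; omega
    · intro i hi; simp only [Finset.mem_range] at hi; simp only [Finset.mem_Icc]; omega
    · intro t ht; simp only [Finset.mem_Icc] at ht
      show a + (((t - a).toNat : ℕ) : ℤ) = t
      omega
    · intro i _
      show ((a + (i : ℤ) - a).toNat) = i
      omega
    · intro t ht
      simp only [Finset.mem_Icc] at ht
      obtain ⟨n, rfl⟩ : ∃ n : ℕ, t = a + (n : ℤ) := ⟨(t - a).toNat, by omega⟩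
      show ((a + (n : ℤ)).negOnePow : ℤ) = (a.negOnePow : ℤ) * (-1) ^ ((a + (n : ℤ) - a).toNat)
      have hn : (a + (n : ℤ) - a).toNat = n := by omega
      rw [hn, Int.negOnePow_add, Units.val_mul, Int.coe_negOnePow_natCast]
  rw [key, ← Finset.mul_sum, neg_one_geom_sum]
  have hcast : ((b + 1 - a).toNat : ℤ) = b + 1 - a := by omega
  by_cases h : Even ((b + 1 - a).toNat)
  · rw [if_pos h, if_pos (by rw [← hcast]; exact_mod_cast h), mul_zero]
  · rw [if_neg h, if_neg (by rw [← hcast]; exact_mod_cast h), mul_one]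

lemma window_sum (m : ℕ) (hodd : Odd m) (hm : 0 < m) (r l a b : ℤ)
    (hEa : Even a) (hOb : Odd b)
    (ha : a ≤ (l - r) / (m : ℤ)) (hb : (l - r) / (m : ℤ) ≤ b) :
    ∑ t ∈ Finset.Icc a b, eta (r + t * (m : ℤ)) l =
      if Even ((l - r) / (m : ℤ)) then 2 * (((l - r).negOnePow : ℤ)) else 0 := by
  set M : ℤ := (m : ℤ) with hMdef
  have hM : 0 < M := by rw [hMdef]; exact_mod_cast hm
  have hModd : Odd M := by rw [hMdef]; exact_mod_cast hodd
  set T : ℤ := (l - r) / M with hT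
  set C : ℤ := ((l - r).negOnePow : ℤ) with hC
  have hstep : ∀ t : ℤ, eta (r + t * M) l =
      (if t ≤ T then 1 else -1) * (C * (t.negOnePow : ℤ)) := by
    intro t
    rw [eta_eq]
    have hcond : (r + t * M ≤ l) ↔ (t ≤ T) := by
      rw [hT, Int.le_ediv_iff_mul_le hM]
      constructor <;> intro h <;> linarith
    have hsign : ((l - (r + t * M)).negOnePow : ℤ) = C * (t.negOnePow : ℤ) := by
      have h1 : l - (r + t * M) = (l - r) - t * M := by ring
      have h2 : (t * M).negOnePow = t.negOnePow := by
        rw [Int.negOnePow_eq_iff]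
        obtain ⟨c, hc⟩ := hModd
        exact ⟨t * c, by rw [hc]; ring⟩
      rw [h1, Int.negOnePow_sub, Units.val_mul, h2, hC]
    rw [hsign]
    simp only [hcond]
  rw [Finset.sum_congr rfl (fun t _ => hstep t)]
  rw [← Finset.sum_filter_add_sum_filter_not (Finset.Icc a b) (· ≤ T)]
  have hf1 : (Finset.Icc a b).filter (· ≤ T) = Finset.Icc a T := by
    ext t; simp only [Finset.mem_filter, Finset.mem_Icc]; omega
  have hf2 : (Finset.Icc a b).filter (fun t => ¬ (t ≤ T)) = Finset.Icc (T + 1) b := by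
    ext t; simp only [Finset.mem_filter, Finset.mem_Icc]; omega
  rw [hf1, hf2]
  have e1 : ∀ t ∈ Finset.Icc a T,
      (if t ≤ T then (1:ℤ) else -1) * (C * (t.negOnePow : ℤ)) = C * (t.negOnePow : ℤ) := by
    intro t ht
    simp only [Finset.mem_Icc] at ht
    rw [if_pos ht.2, one_mul]
  have e2 : ∀ t ∈ Finset.Icc (T + 1) b,
      (if t ≤ T then (1:ℤ) else -1) * (C * (t.negOnePow : ℤ)) = -(C * (t.negOnePow : ℤ)) := by
    intro t ht
    simp only [Finset.mem_Icc] at ht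
    rw [if_neg (by omega)]
    ring
  rw [Finset.sum_congr rfl e1, Finset.sum_congr rfl e2, Finset.sum_neg_distrib,
    ← Finset.mul_sum, ← Finset.mul_sum,
    sum_negOnePow_Icc a T (by omega), sum_negOnePow_Icc (T + 1) b (by omega)]
  rcases Int.even_or_odd T with hTe | hTo
  · have hna : ¬ Even (T + 1 - a) := by
      rcases hEa with ⟨x, hx⟩; rcases hTe with ⟨y, hy⟩
      rintro ⟨z, hz⟩; omega
    have hnb : ¬ Even (b + 1 - (T + 1)) := by
      rcases hOb with ⟨x, hx⟩; rcases hTe with ⟨y, hy⟩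
      rintro ⟨z, hz⟩; omega
    rw [if_neg hna, if_neg hnb, if_pos hTe, Int.negOnePow_even a hEa,
      Int.negOnePow_succ, Int.negOnePow_even T hTe]
    simp only [Units.val_one, Units.val_neg]
    ring
  · have hT0 : ¬ Even T := by rcases hTo with ⟨y, hy⟩; rintro ⟨z, hz⟩; omega
    have hna : Even (T + 1 - a) := by
      rcases hEa with ⟨x, hx⟩; rcases hTo with ⟨y, hy⟩
      exact ⟨y + 1 - x, by omega⟩
    have hnb : Even (b + 1 - (T + 1)) := by
      rcases hOb with ⟨x, hx⟩; rcases hTo with ⟨y, hy⟩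
      exact ⟨x - y, by omega⟩
    rw [if_pos hna, if_pos hnb, if_neg hT0]
    ring

lemma coeff_eq (m : ℕ) (hodd : Odd m) (hm : 0 < m) (r : ℕ) (hr1 : 1 ≤ r)
    (hr2 : r ≤ m - 1) (l : ℤ) :
    (if Even ((l - (r : ℤ)) / (m : ℤ)) then 2 * (((l - (r : ℤ)).negOnePow : ℤ)) else 0) =
      2 * ∑ j ∈ Finset.range m, (-1 : ℤ) ^ j *
        (if l % (2 * (m : ℤ)) = (r : ℤ) + (j : ℤ) then 1 else 0) := by
  set M : ℤ := (m : ℤ) with hMdef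
  have hM : 0 < M := by rw [hMdef]; exact_mod_cast hm
  set a : ℤ := l - (r : ℤ) with hadef
  set j0 : ℤ := a % (2 * M) with hj0
  have h2M : 0 < 2 * M := by omega
  have hj0nn : 0 ≤ j0 := Int.emod_nonneg a (by omega)
  have hj0lt : j0 < 2 * M := Int.emod_lt_of_pos a h2M
  have hdiv : 2 * M * (a / (2 * M)) + j0 = a := Int.mul_ediv_add_emod a (2 * M)
  set q : ℤ := a / (2 * M) with hq
  have hp0 : 0 ≤ l % (2 * M) := Int.emod_nonneg l (by omega)
  have hp1 : l % (2 * M) < 2 * M := Int.emod_lt_of_pos l h2M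
  have hrM : 1 ≤ (r : ℤ) ∧ (r : ℤ) ≤ M - 1 := by
    constructor <;> [exact_mod_cast hr1; omega]
  have hs : j0 = (l % (2 * M) - (r : ℤ)) % (2 * M) := by
    rw [hj0, hadef, Int.sub_emod l (r : ℤ) (2 * M),
      Int.emod_eq_of_lt (by omega) (show (r : ℤ) < 2 * M by omega)]
  have hcond : ∀ j : ℕ, j < m → (l % (2 * M) = (r : ℤ) + (j : ℤ) ↔ (j : ℤ) = j0) := by
    intro j hj
    have hjM : (j : ℤ) < M := by omega
    constructor
    · intro h
      rw [hs, h, show (r : ℤ) + (j : ℤ) - (r : ℤ) = (j : ℤ) by ring,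
        Int.emod_eq_of_lt (by omega) (by omega)]
    · intro h
      by_cases hge : (r : ℤ) ≤ l % (2 * M)
      · have heq : (l % (2 * M) - (r : ℤ)) % (2 * M) = l % (2 * M) - (r : ℤ) :=
          Int.emod_eq_of_lt (by omega) (by omega)
        omega
      · have heq : (l % (2 * M) - (r : ℤ)) % (2 * M) = l % (2 * M) - (r : ℤ) + 2 * M := by
          rw [show l % (2 * M) - (r : ℤ) = (l % (2 * M) - (r : ℤ) + 2 * M) + (2 * M) * (-1) by ring,
            Int.add_mul_emod_self_left,
            Int.emod_eq_of_lt (by omega) (by omega)]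
          ring
        omega
    -- end hcond
  have hsum : ∑ j ∈ Finset.range m, (-1 : ℤ) ^ j *
        (if l % (2 * M) = (r : ℤ) + (j : ℤ) then 1 else 0)
      = ∑ j ∈ Finset.range m, (if j = j0.toNat then (-1 : ℤ) ^ j else 0) := by
    refine Finset.sum_congr rfl fun j hj => ?_
    rw [Finset.mem_range] at hj
    by_cases h : l % (2 * M) = (r : ℤ) + (j : ℤ)
    · rw [if_pos h, if_pos (by have := (hcond j hj).1 h; omega), mul_one]
    · rw [if_neg h, if_neg (fun hc => h ((hcond j hj).2 (by omega))), mul_zero]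
  rw [hsum, Finset.sum_ite_eq' (Finset.range m) j0.toNat (fun j => (-1 : ℤ) ^ j)]
  have hTsplit : a / M = 2 * q + j0 / M := by
    have h1 : a = j0 + (2 * q) * M := by rw [← hdiv]; ring
    rw [h1, Int.add_mul_ediv_right _ _ (ne_of_gt hM)]
    ring
  have hsign : ((l - (r : ℤ)).negOnePow : ℤ) = (-1 : ℤ) ^ (j0.toNat) := by
    have h1 : a.negOnePow = j0.negOnePow := by
      rw [Int.negOnePow_eq_iff]
      exact ⟨M * q, by linarith [hdiv]⟩
    have h2 : ((j0.toNat : ℤ)) = j0 := Int.toNat_of_nonneg hj0nn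
    rw [← hadef, h1, ← Int.coe_negOnePow_natCast j0.toNat, h2]
  by_cases hlt : j0 < M
  · have hj0M : j0 / M = 0 := Int.ediv_eq_zero_of_lt hj0nn hlt
    have hTe : Even (a / M) := by
      rw [hTsplit, hj0M]; exact ⟨q, by ring⟩
    rw [if_pos hTe, hsign, if_pos (Finset.mem_range.2 (by omega))]
  · have hj0M : j0 / M = 1 := by
      have h1 : j0 = (j0 - M) + 1 * M := by ring
      rw [h1, Int.add_mul_ediv_right _ _ (ne_of_gt hM),
        Int.ediv_eq_zero_of_lt (by omega) (by omega)]
      ring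
    have hTo : ¬ Even (a / M) := by
      rw [hTsplit, hj0M]
      rintro ⟨c, hc⟩; omega
    rw [if_neg hTo, if_neg (by rw [Finset.mem_range]; omega)]
    ring

/-- For odd `m > 0`, `1 ≤ r ≤ m-1`, and finitely supported
`s : ℤ → ℤ`, the sequence `N ↦ Σ_{|k| ≤ 2mN, k ≡ r (mod m)} X^k(s)` is
eventually constant with eventual value
`2·Σ_{l=0}^{m-1} (-1)^l (Σ_{i ≡ r+l (mod 2m)} s_i)`. -/
theorem stmt_6 (m : ℕ) (hodd : Odd m) (hm : 0 < m) (r : ℕ) (hr1 : 1 ≤ r)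
    (hr2 : r ≤ m - 1) (s : ℤ →₀ ℤ) :
    ∃ N₀ : ℕ, ∀ N ≥ N₀,
      (∑ k ∈ (Finset.Icc (-(2 * (m : ℤ) * (N : ℤ))) (2 * (m : ℤ) * (N : ℤ))).filter
          (fun k => k % (m : ℤ) = (r : ℤ)), Xchi k s) =
      2 * ∑ l ∈ Finset.range m, (-1) ^ l *
        ∑ i ∈ s.support.filter (fun i => i % (2 * (m : ℤ)) = (r : ℤ) + (l : ℤ)), s i := by
  classical
  set M : ℤ := (m : ℤ) with hMdef
  have hM : 0 < M := by rw [hMdef]; exact_mod_cast hm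
  have hrM : 1 ≤ (r : ℤ) ∧ (r : ℤ) ≤ M - 1 := by
    constructor <;> [exact_mod_cast hr1; omega]
  refine ⟨s.support.sup Int.natAbs + m, fun N hN => ?_⟩
  set B : ℕ := s.support.sup Int.natAbs with hB
  have hX : ∀ k : ℤ, Xchi k s = ∑ l ∈ s.support, eta k l * s l := by
    intro k
    apply finsum_eq_sum_of_support_subset
    intro l hl
    simp only [Function.mem_support, ne_eq] at hl
    simp only [Finset.mem_coe, Finsupp.mem_support_iff]
    intro h; apply hl; rw [h, mul_zero]
  have hreindex :
      ∑ k ∈ (Finset.Icc (-(2 * M * (N : ℤ))) (2 * M * (N : ℤ))).filter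
          (fun k => k % M = (r : ℤ)), Xchi k s
        = ∑ t ∈ Finset.Icc (-(2 * (N : ℤ))) (2 * (N : ℤ) - 1), Xchi ((r : ℤ) + t * M) s := by
    refine Finset.sum_nbij' (fun k => (k - (r : ℤ)) / M) (fun t => (r : ℤ) + t * M)
      ?_ ?_ ?_ ?_ ?_
    · intro k hk
      simp only [Finset.mem_filter, Finset.mem_Icc] at hk
      obtain ⟨⟨hk1, hk2⟩, hk3⟩ := hk
      have hdm := Int.mul_ediv_add_emod k M
      rw [hk3] at hdm
      have hdvd : M ∣ (k - (r : ℤ)) := ⟨k / M, by linarith⟩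
      have h4 : (k - (r : ℤ)) / M * M = k - (r : ℤ) := Int.ediv_mul_cancel hdvd
      simp only [Finset.mem_Icc]
      constructor
      · have h5 : (-(2 * (N : ℤ)) - 1) * M < (k - (r : ℤ)) / M * M := by
          rw [h4]; nlinarith [hrM.1, hrM.2]
        have := (mul_lt_mul_iff_of_pos_right hM).1 h5
        omega
      · have h5 : (k - (r : ℤ)) / M * M < 2 * (N : ℤ) * M := by
          rw [h4]; nlinarith [hrM.1, hrM.2]
        have := (mul_lt_mul_iff_of_pos_right hM).1 h5
        omega
    · intro t ht
      simp only [Finset.mem_Icc] at ht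
      have h1 : -(2 * (N : ℤ)) * M ≤ t * M := mul_le_mul_of_nonneg_right ht.1 hM.le
      have h2 : t * M ≤ (2 * (N : ℤ) - 1) * M := mul_le_mul_of_nonneg_right ht.2 hM.le
      simp only [Finset.mem_filter, Finset.mem_Icc]
      refine ⟨⟨by nlinarith [hrM.1, hrM.2], by nlinarith [hrM.1, hrM.2]⟩, ?_⟩
      rw [mul_comm t M, Int.add_mul_emod_self_left,
        Int.emod_eq_of_lt (by omega) (by omega)]
    · intro k hk
      simp only [Finset.mem_filter, Finset.mem_Icc] at hk
      have hdm := Int.mul_ediv_add_emod k M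
      rw [hk.2] at hdm
      have hdvd : M ∣ (k - (r : ℤ)) := ⟨k / M, by linarith⟩
      show (r : ℤ) + (k - (r : ℤ)) / M * M = k
      rw [Int.ediv_mul_cancel hdvd]; ring
    · intro t _
      show ((r : ℤ) + t * M - (r : ℤ)) / M = t
      rw [show (r : ℤ) + t * M - (r : ℤ) = t * M by ring, Int.mul_ediv_cancel t (ne_of_gt hM)]
    · intro k hk
      simp only [Finset.mem_filter, Finset.mem_Icc] at hk
      have hdm := Int.mul_ediv_add_emod k M
      rw [hk.2] at hdm
      have hdvd : M ∣ (k - (r : ℤ)) := ⟨k / M, by linarith⟩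
      show Xchi k s = Xchi ((r : ℤ) + (k - (r : ℤ)) / M * M) s
      have : (r : ℤ) + (k - (r : ℤ)) / M * M = k := by
        rw [Int.ediv_mul_cancel hdvd]; ring
      rw [this]
  rw [hreindex]
  rw [Finset.sum_congr rfl (fun t _ => hX ((r : ℤ) + t * M))]
  rw [Finset.sum_comm]
  have hwin : ∀ l ∈ s.support,
      ∑ t ∈ Finset.Icc (-(2 * (N : ℤ))) (2 * (N : ℤ) - 1), eta ((r : ℤ) + t * M) l * s l
      = (2 * ∑ j ∈ Finset.range m, (-1 : ℤ) ^ j *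
          (if l % (2 * M) = (r : ℤ) + (j : ℤ) then 1 else 0)) * s l := by
    intro l hl
    have hlB : l.natAbs ≤ B := Finset.le_sup hl
    have hNB : (B : ℤ) + (m : ℤ) ≤ (N : ℤ) := by exact_mod_cast hN
    have h2N : 2 * (N : ℤ) ≤ 2 * (N : ℤ) * M := by nlinarith
    have ha : -(2 * (N : ℤ)) ≤ (l - (r : ℤ)) / M := by
      rw [Int.le_ediv_iff_mul_le hM]
      have hl1 : -(B : ℤ) ≤ l := by omega
      nlinarith [hrM.2]
    have hb : (l - (r : ℤ)) / M ≤ 2 * (N : ℤ) - 1 := by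
      have h5 : ¬ (2 * (N : ℤ) ≤ (l - (r : ℤ)) / M) := by
        rw [Int.le_ediv_iff_mul_le hM]
        intro h
        have hl2 : l ≤ (B : ℤ) := by omega
        nlinarith [hrM.1]
      push_neg at h5
      have h6 := Int.lt_iff_add_one_le.mp h5
      linarith
    rw [← Finset.sum_mul,
      window_sum m hodd hm (r : ℤ) l _ _ ⟨-(N : ℤ), by ring⟩ ⟨(N : ℤ) - 1, by ring⟩ ha hb,
      coeff_eq m hodd hm r hr1 hr2 l]
  rw [Finset.sum_congr rfl hwin]
  -- now swap the RHS
  have hP : ∀ (j : ℕ) (l : ℤ), Prop := fun j l => l % (2 * M) = (r : ℤ) + (j : ℤ)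
  calc ∑ l ∈ s.support, (2 * ∑ j ∈ Finset.range m, (-1 : ℤ) ^ j *
          (if l % (2 * M) = (r : ℤ) + (j : ℤ) then 1 else 0)) * s l
      = ∑ l ∈ s.support, ∑ j ∈ Finset.range m,
          2 * ((-1 : ℤ) ^ j * (if l % (2 * M) = (r : ℤ) + (j : ℤ) then s l else 0)) := by
        refine Finset.sum_congr rfl fun l _ => ?_
        rw [Finset.mul_sum, Finset.sum_mul]
        refine Finset.sum_congr rfl fun j _ => ?_
        split_ifs <;> ring
    _ = ∑ j ∈ Finset.range m, ∑ l ∈ s.support,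
          2 * ((-1 : ℤ) ^ j * (if l % (2 * M) = (r : ℤ) + (j : ℤ) then s l else 0)) :=
        Finset.sum_comm
    _ = 2 * ∑ j ∈ Finset.range m, (-1 : ℤ) ^ j *
          ∑ i ∈ s.support.filter (fun i => i % (2 * M) = (r : ℤ) + (j : ℤ)), s i := by
        rw [Finset.mul_sum]
        refine Finset.sum_congr rfl fun j _ => ?_
        rw [Finset.sum_filter, Finset.mul_sum, Finset.mul_sum]
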